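/- Let f: [0,∞) → ℝ be Lebesgue-measurable and bounded. Then limsup_{α↓0} α ∫₀^∞ e^{-αt} f(t) dt ≤ limsup_{T→∞} (1/T)∫₀^T f(t) dt, and liminf_{T→∞} (1/T)∫₀^T f(t) dt ≤ liminf_{α↓0} α ∫₀^∞ e^{-αt} f(t) dt. -/

import Mathlib

open Filter MeasureTheory


open Set Real


lemma Iexp {α : ℝ} (hα : 0 < α) (t : ℝ) :
    ∫ s in Ioi t, Real.exp (-α * s) = Real.exp (-α * t) / α := by
  have hderiv : ∀ x ∈ Ioi t, HasDerivAt (fun s => -Real.exp (-α * s) / α)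
      (Real.exp (-α * x)) x := by
    intro x _
    have h1 : HasDerivAt (fun s : ℝ => -α * s) (-α) x := by
      simpa using (hasDerivAt_id x).const_mul (-α)
    have h2 := (h1.exp).neg.div_const α
    convert h2 using 1
    · rfl
    · rfl
    · rfl
    · rw [eq_div_iff hα.ne']; ring
  have htend : Tendsto (fun s => -Real.exp (-α * s) / α) atTop (nhds 0) := by
    have : Tendsto (fun s : ℝ => Real.exp (-α * s)) atTop (nhds 0) := by
      apply Real.tendsto_exp_atBot.comp
      exact Tendsto.const_mul_atTop_of_neg (neg_neg_iff_pos.mpr hα) tendsto_id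
    simpa using (this.neg).div_const α
  have hcont : ContinuousWithinAt (fun s => -Real.exp (-α * s) / α) (Ici t) t := by
    exact Continuous.continuousWithinAt (by continuity)
  have := integral_Ioi_of_hasDerivAt_of_tendsto hcont hderiv
    (exp_neg_integrableOn_Ioi t hα) htend
  rw [this]; ring

lemma Ipoly {α : ℝ} (hα : 0 < α) :
    ∫ s in Ioi (0:ℝ), s * Real.exp (-α * s) = 1 / α ^ 2 := by
  have h := integral_rpow_mul_exp_neg_mul_rpow (p := 1) (q := 1) (b := α)
    one_pos (by norm_num) hα
  simp only [Real.rpow_one] at h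
  rw [h]
  have : (-(1 + 1) / 1 : ℝ) = ((-2 : ℤ) : ℝ) := by norm_num
  rw [this, Real.rpow_intCast, show ((1:ℝ)+1)/1 = 2 by norm_num, Real.Gamma_two]
  simp [zpow_neg]

lemma IpolyOn {α : ℝ} (hα : 0 < α) :
    IntegrableOn (fun s => s * Real.exp (-α * s)) (Ioi (0:ℝ)) := by
  have h := integrableOn_rpow_mul_exp_neg_mul_rpow (p := 1) (s := 1) (b := α)
    (by norm_num) one_pos hα
  simpa [Real.rpow_one] using h

lemma intervalInt (f : ℝ → ℝ) (hf : Measurable f) (M : ℝ) (hb : ∀ t, |f t| ≤ M)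
    (a b : ℝ) : IntervalIntegrable f volume a b := by
  rw [intervalIntegrable_iff]
  refine Integrable.mono' (g := fun _ => M) ?_ (hf.aestronglyMeasurable.restrict) ?_
  · exact integrableOn_const measure_Ioc_lt_top.ne
  · exact ae_of_all _ fun t => by simpa using hb t

lemma fubini_key (f : ℝ → ℝ) (hf : Measurable f) (M : ℝ) (hb : ∀ t, |f t| ≤ M)
    {α : ℝ} (hα : 0 < α) :
    ∫ t in Ioi (0:ℝ), Real.exp (-α * t) * f t
      = ∫ s in Ioi (0:ℝ), α * Real.exp (-α * s) * ∫ t in (0:ℝ)..s, f t := by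
  have hα' : (0:ℝ) < α := hα
  set μ := volume.restrict (Ioi (0:ℝ)) with hμ
  set k : ℝ → ℝ → ℝ := fun t s => Set.indicator (Set.Ioi t)
    (fun s' => f t * (α * Real.exp (-α * s'))) s with hk
  have huncurry : Function.uncurry k = Set.indicator {p : ℝ × ℝ | p.1 < p.2}
      (fun p => f p.1 * (α * Real.exp (-α * p.2))) := by
    funext p
    simp [hk, Function.uncurry, Set.indicator, Set.mem_Ioi, Set.mem_setOf_eq]
  have hmeas : Measurable (Function.uncurry k) := by
    rw [huncurry]
    apply Measurable.indicator
    · exact (hf.comp measurable_fst).mul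
        (measurable_const.mul ((measurable_snd.const_mul (-α)).exp))
    · exact measurableSet_lt measurable_fst measurable_snd
  have hIexp : ∀ t : ℝ, ∫ s in Ioi t, Real.exp (-α * s) = Real.exp (-α * t) / α :=
    Iexp hα
  -- integrability of uncurry k on μ.prod μ
  have hint : Integrable (Function.uncurry k) (μ.prod μ) := by
    rw [integrable_prod_iff hmeas.aestronglyMeasurable]
    constructor
    · refine ae_of_all _ fun t => ?_
      have h1 : Integrable (fun s => f t * (α * Real.exp (-α * s))) μ := by
        have h2 := (exp_neg_integrableOn_Ioi 0 hα).const_mul (f t * α)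
        refine h2.congr (ae_of_all _ fun s => by ring)
      exact h1.indicator measurableSet_Ioi
    · refine Integrable.mono' (g := fun t => M * Real.exp (-α * t))
        ((exp_neg_integrableOn_Ioi 0 hα).const_mul M)
        ((hmeas.aestronglyMeasurable.norm).integral_prod_right') ?_
      rw [hμ]
      refine (ae_restrict_iff' measurableSet_Ioi).mpr (ae_of_all _ fun t ht => ?_)
      have ht0 : (0:ℝ) < t := ht
      have hM0 : 0 ≤ M := (abs_nonneg _).trans (hb 0)
      have hnorm : ∀ s, ‖Function.uncurry k (t, s)‖
          = Set.indicator (Set.Ioi t) (fun s' => |f t| * (α * Real.exp (-α * s'))) s := by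
        intro s
        simp only [Function.uncurry, hk, Set.indicator]
        split <;> simp [abs_mul, abs_of_pos hα, abs_of_pos (Real.exp_pos _)]
      rw [Real.norm_eq_abs]
      have hcalc : ∫ s, ‖Function.uncurry k (t, s)‖ ∂μ = |f t| * Real.exp (-α * t) := by
        simp_rw [hnorm]
        rw [hμ, integral_indicator measurableSet_Ioi, Measure.restrict_restrict measurableSet_Ioi,
          Set.Ioi_inter_Ioi, max_eq_left ht0.le, integral_const_mul, integral_const_mul, hIexp t]
        field_simp
      rw [hcalc, abs_of_nonneg (by positivity)]
      exact mul_le_mul_of_nonneg_right (hb t) (Real.exp_pos _).le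
  have hswap := integral_integral_swap (f := k) hint
  -- LHS computation
  have hL : ∫ t, (∫ s, k t s ∂μ) ∂μ = ∫ t in Ioi (0:ℝ), Real.exp (-α * t) * f t := by
    rw [hμ]
    refine setIntegral_congr_fun measurableSet_Ioi fun t ht => ?_
    have ht0 : (0:ℝ) < t := ht
    simp only [hk]
    rw [integral_indicator measurableSet_Ioi, Measure.restrict_restrict measurableSet_Ioi,
      Set.Ioi_inter_Ioi, max_eq_left ht0.le, integral_const_mul, integral_const_mul, hIexp t]
    field_simp
  -- RHS computation
  have hR : ∫ s, (∫ t, k t s ∂μ) ∂μ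
      = ∫ s in Ioi (0:ℝ), α * Real.exp (-α * s) * ∫ t in (0:ℝ)..s, f t := by
    rw [hμ]
    refine setIntegral_congr_fun measurableSet_Ioi fun s hs => ?_
    have hs0 : (0:ℝ) < s := hs
    have hptwise : ∀ t, k t s = Set.indicator (Set.Iio s)
        (fun t' => f t' * (α * Real.exp (-α * s))) t := by
      intro t
      simp [hk, Set.indicator, Set.mem_Ioi, Set.mem_Iio]
    simp_rw [hptwise]
    rw [integral_indicator measurableSet_Iio, Measure.restrict_restrict measurableSet_Iio,
      Set.Iio_inter_Ioi, integral_mul_const,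
      ← MeasureTheory.integral_Ioc_eq_integral_Ioo,
      ← intervalIntegral.integral_of_le hs0.le]
    ring
  rw [hL, hR] at hswap
  exact hswap


lemma neg_limsup {β : Type*} (l : Filter β) [l.NeBot] (u : β → ℝ) (M : ℝ)
    (h : ∀ᶠ x in l, |u x| ≤ M) :
    limsup (fun x => -u x) l = -liminf u l := by
  have hub : IsBoundedUnder (· ≤ ·) l u :=
    isBoundedUnder_of_eventually_le (h.mono fun x hx => (abs_le.1 hx).2)
  have hlb : IsBoundedUnder (· ≥ ·) l u :=
    isBoundedUnder_of_eventually_ge (a := -M) (h.mono fun x hx => (abs_le.1 hx).1)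
  have hnub : IsBoundedUnder (· ≤ ·) l (fun x => -u x) :=
    isBoundedUnder_of_eventually_le (h.mono fun x hx => by
      have := (abs_le.1 hx).1; linarith)
  have hnlb : IsBoundedUnder (· ≥ ·) l (fun x => -u x) :=
    isBoundedUnder_of_eventually_ge (a := -M) (h.mono fun x hx => by
      have := (abs_le.1 hx).2; linarith)
  apply le_antisymm
  · apply le_of_forall_pos_le_add
    intro ε hε
    have h1 : liminf u l - ε < liminf u l := by linarith
    have h2 := eventually_lt_of_lt_liminf h1 hlb
    refine limsup_le_of_le hnlb.isCoboundedUnder_le ?_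
    exact h2.mono fun x hx => by linarith
  · rw [neg_le]
    apply le_of_forall_pos_le_add
    intro ε hε
    have h1 : limsup (fun x => -u x) l < limsup (fun x => -u x) l + ε := by linarith
    have h2 := eventually_lt_of_limsup_lt h1 hnub
    have h3 : -(limsup (fun x => -u x) l) - ε ≤ liminf u l := by
      refine le_liminf_of_le hub.isCoboundedUnder_ge ?_
      exact h2.mono fun x hx => by linarith
    linarith


section
variable (f : ℝ → ℝ) (hf : Measurable f) (M : ℝ) (hb : ∀ t, |f t| ≤ M)

-- integrability of the Abel integrand
lemma expf_int (hf : Measurable f) (hb : ∀ t, |f t| ≤ M) {α : ℝ} (hα : 0 < α) :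
    IntegrableOn (fun t => Real.exp (-α * t) * f t) (Ioi (0:ℝ)) := by
  refine Integrable.mono' ((exp_neg_integrableOn_Ioi 0 hα).const_mul M)
    ((Real.measurable_exp.comp (measurable_id.const_mul (-α))).mul hf).aestronglyMeasurable.restrict
    (ae_of_all _ fun t => ?_)
  rw [Real.norm_eq_abs, abs_mul, abs_of_pos (Real.exp_pos _)]
  calc Real.exp (-α * t) * |f t| ≤ Real.exp (-α * t) * M :=
        mul_le_mul_of_nonneg_left (hb t) (Real.exp_pos _).le
    _ = M * Real.exp (-α * t) := by ring

lemma abel_abs (hf : Measurable f) (hb : ∀ t, |f t| ≤ M) {α : ℝ} (hα : 0 < α) :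
    |α * ∫ t in Ioi (0:ℝ), Real.exp (-α * t) * f t| ≤ M := by
  have h1 : |∫ t in Ioi (0:ℝ), Real.exp (-α * t) * f t| ≤ M / α := by
    have h2 := norm_integral_le_of_norm_le (f := fun t => Real.exp (-α * t) * f t)
      (g := fun t => M * Real.exp (-α * t)) (μ := volume.restrict (Ioi 0))
      ((exp_neg_integrableOn_Ioi 0 hα).const_mul M)
      (ae_of_all _ fun t => by
        rw [Real.norm_eq_abs, abs_mul, abs_of_pos (Real.exp_pos _)]
        calc Real.exp (-α * t) * |f t| ≤ Real.exp (-α * t) * M :=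
              mul_le_mul_of_nonneg_left (hb t) (Real.exp_pos _).le
          _ = M * Real.exp (-α * t) := by ring)
    rw [Real.norm_eq_abs] at h2
    calc |∫ t in Ioi (0:ℝ), Real.exp (-α * t) * f t|
        ≤ ∫ t in Ioi (0:ℝ), M * Real.exp (-α * t) := h2
      _ = M * (Real.exp (-α * 0) / α) := by rw [integral_const_mul, Iexp hα]
      _ = M / α := by simp; ring
  have := abs_nonneg (∫ t in Ioi (0:ℝ), Real.exp (-α * t) * f t)
  rw [abs_mul, abs_of_pos hα]
  calc α * |∫ t in Ioi (0:ℝ), Real.exp (-α * t) * f t| ≤ α * (M / α) :=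
        mul_le_mul_of_nonneg_left h1 hα.le
    _ = M := by field_simp

lemma cesaro_abs (hf : Measurable f) (hb : ∀ t, |f t| ≤ M) {T : ℝ} (hT : 0 < T) :
    |(1 / T) * ∫ t in (0:ℝ)..T, f t| ≤ M := by
  have h1 : ‖∫ t in (0:ℝ)..T, f t‖ ≤ M * |T - 0| :=
    intervalIntegral.norm_integral_le_of_norm_le_const fun x _ => by
      rw [Real.norm_eq_abs]; exact hb x
  rw [Real.norm_eq_abs] at h1
  rw [abs_mul, abs_of_pos (by positivity : (0:ℝ) < 1 / T)]
  have h2 : |∫ t in (0:ℝ)..T, f t| ≤ M * T := by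
    simpa [abs_of_pos hT] using h1
  calc (1 / T) * |∫ t in (0:ℝ)..T, f t| ≤ (1 / T) * (M * T) :=
        mul_le_mul_of_nonneg_left h2 (by positivity)
    _ = M := by field_simp

end

set_option maxHeartbeats 1000000 in
lemma core (f : ℝ → ℝ) (hf : Measurable f) (M : ℝ) (hb : ∀ t, |f t| ≤ M) :
    limsup (fun α : ℝ => α * ∫ t in Set.Ioi (0:ℝ), Real.exp (-α * t) * f t)
        (nhdsWithin 0 (Set.Ioi 0))
      ≤ limsup (fun T : ℝ => (1 / T) * ∫ t in (0:ℝ)..T, f t) atTop := by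
  have hM0 : 0 ≤ M := (abs_nonneg _).trans (hb 0)
  set A : ℝ → ℝ := fun α => α * ∫ t in Set.Ioi (0:ℝ), Real.exp (-α * t) * f t with hA
  set C : ℝ → ℝ := fun T => (1 / T) * ∫ t in (0:ℝ)..T, f t with hC
  set F : ℝ → ℝ := fun s => ∫ t in (0:ℝ)..s, f t with hF
  have hFcont : Continuous F := intervalIntegral.continuous_primitive
    (intervalInt f hf M hb) 0
  have hFb : ∀ s : ℝ, 0 ≤ s → |F s| ≤ M * s := by
    intro s hs
    have h1 : ‖∫ t in (0:ℝ)..s, f t‖ ≤ M * |s - 0| :=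
      intervalIntegral.norm_integral_le_of_norm_le_const fun x _ => by
        rw [Real.norm_eq_abs]; exact hb x
    simpa [abs_of_nonneg hs] using h1
  -- boundedness facts
  have hAbd : ∀ᶠ α in nhdsWithin (0:ℝ) (Set.Ioi 0), |A α| ≤ M := by
    filter_upwards [self_mem_nhdsWithin] with α hα
    exact abel_abs f M hf hb hα
  have hCbd : ∀ᶠ T in (atTop : Filter ℝ), |C T| ≤ M := by
    filter_upwards [eventually_gt_atTop 0] with T hT
    exact cesaro_abs f M hf hb hT
  have hCub : IsBoundedUnder (· ≤ ·) atTop C :=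
    isBoundedUnder_of_eventually_le (hCbd.mono fun x hx => (abs_le.1 hx).2)
  have hAlb : IsBoundedUnder (· ≥ ·) (nhdsWithin (0:ℝ) (Set.Ioi 0)) A :=
    isBoundedUnder_of_eventually_ge (a := -M) (hAbd.mono fun x hx => (abs_le.1 hx).1)
  set L : ℝ := limsup C atTop with hL
  apply le_of_forall_pos_le_add
  intro ε hε
  -- choose T₀
  have h1 : limsup C atTop < L + ε / 2 := by rw [← hL]; linarith
  obtain ⟨T₁, hT₁⟩ := (eventually_atTop).1 (eventually_lt_of_limsup_lt h1 hCub)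
  set T₀ : ℝ := max T₁ 1 with hT₀
  have hT₀pos : (0:ℝ) < T₀ := lt_of_lt_of_le one_pos (le_max_right _ _)
  set c : ℝ := L + ε / 2 with hc
  have hCle : ∀ T ≥ T₀, C T ≤ c := fun T hT =>
    (hT₁ T ((le_max_left _ _).trans hT)).le
  set K : ℝ := T₀ ^ 2 * (M + |c|) with hK
  have hK0 : 0 ≤ K := by positivity
  -- eventual smallness of α^2 * K
  have htend : Tendsto (fun α : ℝ => α ^ 2 * K) (nhdsWithin 0 (Set.Ioi 0)) (nhds 0) := by
    have hcontK : Continuous (fun α : ℝ => α ^ 2 * K) := by fun_prop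
    have h2 : Tendsto (fun α : ℝ => α ^ 2 * K) (nhds 0) (nhds 0) := by
      simpa using hcontK.tendsto (0:ℝ)
    exact h2.mono_left nhdsWithin_le_nhds
  have hsmall : ∀ᶠ α in nhdsWithin (0:ℝ) (Set.Ioi 0), α ^ 2 * K < ε / 2 :=
    htend.eventually_lt_const (by linarith)
  -- main eventual estimate
  have hmain : ∀ᶠ α in nhdsWithin (0:ℝ) (Set.Ioi 0), A α ≤ L + ε := by
    filter_upwards [hsmall, self_mem_nhdsWithin] with α hαK hαpos
    have hα : (0:ℝ) < α := hαpos
    -- Abel mean as weighted average of F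
    have hAeq : A α = α ^ 2 * ∫ s in Set.Ioi (0:ℝ), Real.exp (-α * s) * F s := by
      rw [hA]
      simp only
      rw [fubini_key f hf M hb hα]
      rw [show (fun s => α * Real.exp (-α * s) * ∫ t in (0:ℝ)..s, f t)
          = (fun s => α * (Real.exp (-α * s) * F s)) by funext s; rw [hF]; ring]
      rw [integral_const_mul]
      ring
    set G : ℝ → ℝ := fun s => Real.exp (-α * s) * F s with hG
    have hGcont : Continuous G := by
      rw [hG]; exact (Real.continuous_exp.comp (by fun_prop)).mul hFcont
    have hGint : IntegrableOn G (Set.Ioi 0) := by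
      refine Integrable.mono' ((IpolyOn hα).const_mul M)
        hGcont.aestronglyMeasurable.restrict ?_
      refine (ae_restrict_iff' measurableSet_Ioi).mpr (ae_of_all _ fun s hs => ?_)
      have hs0 : (0:ℝ) < s := hs
      rw [Real.norm_eq_abs, hG]
      simp only
      rw [abs_mul, abs_of_pos (Real.exp_pos _)]
      calc Real.exp (-α * s) * |F s| ≤ Real.exp (-α * s) * (M * s) :=
            mul_le_mul_of_nonneg_left (hFb s hs0.le) (Real.exp_pos _).le
        _ = M * (s * Real.exp (-α * s)) := by ring
    have hG1 : IntegrableOn G (Set.Ioc 0 T₀) :=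
      hGint.mono_set (Set.Ioc_subset_Ioi_self)
    have hG2 : IntegrableOn G (Set.Ioi T₀) :=
      hGint.mono_set (Set.Ioi_subset_Ioi hT₀pos.le)
    have hWint : IntegrableOn (fun s => s * Real.exp (-α * s)) (Set.Ioi 0) := IpolyOn hα
    have hW1 : IntegrableOn (fun s => s * Real.exp (-α * s)) (Set.Ioc 0 T₀) :=
      hWint.mono_set (Set.Ioc_subset_Ioi_self)
    have hW2 : IntegrableOn (fun s => s * Real.exp (-α * s)) (Set.Ioi T₀) :=
      hWint.mono_set (Set.Ioi_subset_Ioi hT₀pos.le)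
    -- split
    have hsplit : ∫ s in Set.Ioi (0:ℝ), G s
        = (∫ s in Set.Ioc (0:ℝ) T₀, G s) + ∫ s in Set.Ioi T₀, G s := by
      rw [← Set.Ioc_union_Ioi_eq_Ioi hT₀pos.le]
      exact setIntegral_union (Set.Ioc_disjoint_Ioi le_rfl) measurableSet_Ioi hG1 hG2
    have hWsplit : ∫ s in Set.Ioi (0:ℝ), s * Real.exp (-α * s)
        = (∫ s in Set.Ioc (0:ℝ) T₀, s * Real.exp (-α * s))
          + ∫ s in Set.Ioi T₀, s * Real.exp (-α * s) := by
      rw [← Set.Ioc_union_Ioi_eq_Ioi hT₀pos.le]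
      exact setIntegral_union (Set.Ioc_disjoint_Ioi le_rfl) measurableSet_Ioi hW1 hW2
    set J : ℝ := ∫ s in Set.Ioc (0:ℝ) T₀, s * Real.exp (-α * s) with hJ
    have hJ0 : 0 ≤ J := setIntegral_nonneg measurableSet_Ioc fun s hs => by
      have : (0:ℝ) < s := hs.1
      positivity
    have hJle : J ≤ T₀ * T₀ := by
      have h3 : ‖∫ s in Set.Ioc (0:ℝ) T₀, s * Real.exp (-α * s)‖
          ≤ T₀ * (volume (Set.Ioc (0:ℝ) T₀)).toReal := by
        refine norm_setIntegral_le_of_norm_le_const measure_Ioc_lt_top (fun s hs => ?_)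
        rw [Real.norm_eq_abs, abs_mul, abs_of_pos (lt_of_lt_of_le hs.1 le_rfl : (0:ℝ) < s),
          abs_of_pos (Real.exp_pos _)]
        calc s * Real.exp (-α * s) ≤ s * 1 := by
              refine mul_le_mul_of_nonneg_left ?_ (le_of_lt hs.1)
              exact Real.exp_le_one_iff.mpr (by nlinarith [hs.1])
          _ ≤ T₀ := by rw [mul_one]; exact hs.2
      rw [Real.volume_Ioc] at h3
      simp only [sub_zero] at h3
      rw [ENNReal.toReal_ofReal hT₀pos.le] at h3
      calc J ≤ |J| := le_abs_self _
        _ ≤ T₀ * T₀ := by rw [hJ]; exact h3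
    have hJIoi : ∫ s in Set.Ioi T₀, s * Real.exp (-α * s) = 1 / α ^ 2 - J := by
      have := Ipoly hα
      rw [hWsplit] at this
      linarith
    -- estimate term 1
    have hT1 : ∫ s in Set.Ioc (0:ℝ) T₀, G s ≤ M * (T₀ * T₀) := by
      have h3 : ‖∫ s in Set.Ioc (0:ℝ) T₀, G s‖
          ≤ M * T₀ * (volume (Set.Ioc (0:ℝ) T₀)).toReal := by
        refine norm_setIntegral_le_of_norm_le_const measure_Ioc_lt_top (fun s hs => ?_)
        rw [Real.norm_eq_abs, hG]
        simp only
        rw [abs_mul, abs_of_pos (Real.exp_pos _)]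
        have he1 : Real.exp (-α * s) ≤ 1 := Real.exp_le_one_iff.mpr (by nlinarith [hs.1])
        calc Real.exp (-α * s) * |F s| ≤ 1 * (M * s) := by
              refine mul_le_mul he1 (hFb s hs.1.le) (abs_nonneg _) one_pos.le
          _ = M * s := by ring
          _ ≤ M * T₀ := mul_le_mul_of_nonneg_left hs.2 hM0
      rw [Real.volume_Ioc] at h3
      simp only [sub_zero] at h3
      rw [ENNReal.toReal_ofReal hT₀pos.le] at h3
      calc (∫ s in Set.Ioc (0:ℝ) T₀, G s) ≤ |∫ s in Set.Ioc (0:ℝ) T₀, G s| := le_abs_self _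
        _ ≤ M * T₀ * T₀ := h3
        _ = M * (T₀ * T₀) := by ring
    -- estimate term 2
    have hT2 : ∫ s in Set.Ioi T₀, G s ≤ c * (1 / α ^ 2 - J) := by
      have h4 : ∫ s in Set.Ioi T₀, G s ≤ ∫ s in Set.Ioi T₀, c * (s * Real.exp (-α * s)) := by
        refine setIntegral_mono_on hG2 (hW2.const_mul c) measurableSet_Ioi fun s hs => ?_
        have hsT : T₀ ≤ s := le_of_lt hs
        have hs0 : (0:ℝ) < s := lt_of_lt_of_le hT₀pos hsT
        have hCs : C s ≤ c := hCle s hsT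
        have hFs : F s ≤ c * s := by
          have h5 : F s = s * C s := by
            rw [hC, hF]; simp only; field_simp
          rw [h5]
          calc s * C s ≤ s * c := mul_le_mul_of_nonneg_left hCs hs0.le
            _ = c * s := by ring
        rw [hG]
        simp only
        calc Real.exp (-α * s) * F s ≤ Real.exp (-α * s) * (c * s) :=
              mul_le_mul_of_nonneg_left hFs (Real.exp_pos _).le
          _ = c * (s * Real.exp (-α * s)) := by ring
      rw [integral_const_mul, hJIoi] at h4
      exact h4
    -- combine
    have hfinal : A α ≤ c + α ^ 2 * K := by
      rw [hAeq, hsplit, mul_add]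
      have e1 : α ^ 2 * (1 / α ^ 2) = 1 := by field_simp
      have h6 : α ^ 2 * ∫ s in Set.Ioc (0:ℝ) T₀, G s ≤ α ^ 2 * (M * (T₀ * T₀)) :=
        mul_le_mul_of_nonneg_left hT1 (sq_nonneg α)
      have h7 : α ^ 2 * ∫ s in Set.Ioi T₀, G s ≤ α ^ 2 * (c * (1 / α ^ 2 - J)) :=
        mul_le_mul_of_nonneg_left hT2 (sq_nonneg α)
      have h8 : α ^ 2 * (c * (1 / α ^ 2 - J)) = c - c * (α ^ 2 * J) := by
        field_simp
      have h7' : α ^ 2 * ∫ s in Set.Ioi T₀, G s ≤ c - c * (α ^ 2 * J) := h7.trans (le_of_eq h8)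
      have h9 : -(c * (α ^ 2 * J)) ≤ |c| * (α ^ 2 * (T₀ * T₀)) := by
        have ha1 : 0 ≤ α ^ 2 * J := by positivity
        have ha2 : α ^ 2 * J ≤ α ^ 2 * (T₀ * T₀) :=
          mul_le_mul_of_nonneg_left hJle (sq_nonneg α)
        nlinarith [neg_abs_le c, le_abs_self c, abs_nonneg c]
      rw [hK]
      calc (α ^ 2 * ∫ s in Set.Ioc (0:ℝ) T₀, G s) + α ^ 2 * ∫ s in Set.Ioi T₀, G s
          ≤ α ^ 2 * (M * (T₀ * T₀)) + (c - c * (α ^ 2 * J)) := by linarith [h6, h7']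
        _ ≤ α ^ 2 * (M * (T₀ * T₀)) + c + |c| * (α ^ 2 * (T₀ * T₀)) := by linarith
        _ = c + α ^ 2 * (T₀ ^ 2 * (M + |c|)) := by ring
    calc A α ≤ c + α ^ 2 * K := hfinal
      _ ≤ c + ε / 2 := by linarith
      _ = L + ε := by rw [hc]; ring
  exact limsup_le_of_le hAlb.isCoboundedUnder_le hmain

/-- Feller's Tauberian inequalities: for measurable bounded
`f : [0,∞) → ℝ`, the Abel means are squeezed between the liminf and limsup of
the Cesàro means:
`limsup_{α↓0} α∫₀^∞ e^{-αt} f ≤ limsup_{T→∞} (1/T)∫₀^T f` and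
`liminf_{T→∞} (1/T)∫₀^T f ≤ liminf_{α↓0} α∫₀^∞ e^{-αt} f`. -/
theorem stmt_8 (f : ℝ → ℝ) (hf : Measurable f) (M : ℝ) (hb : ∀ t, |f t| ≤ M) :
    (limsup (fun α : ℝ => α * ∫ t in Set.Ioi (0:ℝ), Real.exp (-α * t) * f t)
        (nhdsWithin 0 (Set.Ioi 0))
      ≤ limsup (fun T : ℝ => (1 / T) * ∫ t in (0:ℝ)..T, f t) atTop) ∧
    (liminf (fun T : ℝ => (1 / T) * ∫ t in (0:ℝ)..T, f t) atTop
      ≤ liminf (fun α : ℝ => α * ∫ t in Set.Ioi (0:ℝ), Real.exp (-α * t) * f t)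
          (nhdsWithin 0 (Set.Ioi 0))) := by
  constructor
  · exact core f hf M hb
  · have hnb : ∀ t, |(fun t => -f t) t| ≤ M := fun t => by simpa using hb t
    have h := core (fun t => -f t) hf.neg M hnb
    have hAneg : (fun α : ℝ => α * ∫ t in Set.Ioi (0:ℝ), Real.exp (-α * t) * (-f t))
        = fun α : ℝ => -(α * ∫ t in Set.Ioi (0:ℝ), Real.exp (-α * t) * f t) := by
      funext α
      rw [show (fun t => Real.exp (-α * t) * (-f t))
          = fun t => -(Real.exp (-α * t) * f t) by funext t; ring]
      rw [integral_neg]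
      ring
    have hCneg : (fun T : ℝ => (1 / T) * ∫ t in (0:ℝ)..T, -f t)
        = fun T : ℝ => -((1 / T) * ∫ t in (0:ℝ)..T, f t) := by
      funext T
      rw [intervalIntegral.integral_neg]
      ring
    rw [hAneg, hCneg] at h
    rw [neg_limsup (nhdsWithin (0:ℝ) (Set.Ioi 0)) _ M (by
        filter_upwards [self_mem_nhdsWithin] with α hα
        exact abel_abs f M hf hb hα),
      neg_limsup (atTop : Filter ℝ) _ M (by
        filter_upwards [eventually_gt_atTop 0] with T hT
        exact cesaro_abs f M hf hb hT)] at h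
    linarith
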